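/- If Γ has linearly independent rows γ₁, …, γ_K and S_i (i = 1,…,K−t) are subspaces such that each S_i ⊆ span{γ₁, …, γ_t, γ_{t+i}} with S_i not contained in span{γ₁,…,γ_t} and dim S_i ≥ 2, then dim span{S₁ ∪ ⋯ ∪ S_{K−t}} ≥ K − t + 1. -/

import Mathlib

open Submodule in
/-- Dimension counting: if each subspace `Sᵢ ⊆ span{γ₁,…,γ_t,γ_{t+i}}` has dimension at
least 2 and is not contained in `span{γ₁,…,γ_t}`, then the span of all the `Sᵢ` has
dimension at least `K − t + 1`. -/
theorem dim_span_union_ge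
    {K t : ℕ} (htK : t + 1 ≤ K)
    (γ : Fin K → (Fin K → ℝ)) (hγ : LinearIndependent ℝ γ)
    (S : Fin (K - t) → Submodule ℝ (Fin K → ℝ))
    (hsub : ∀ i : Fin (K - t),
      S i ≤ span ℝ (γ '' {j : Fin K | (j : ℕ) < t}) ⊔
        span ℝ {γ ⟨t + (i : ℕ), by have := i.isLt; omega⟩})
    (hnot : ∀ i : Fin (K - t), ¬ S i ≤ span ℝ (γ '' {j : Fin K | (j : ℕ) < t}))
    (hdim : ∀ i : Fin (K - t), 2 ≤ Module.finrank ℝ (S i)) :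
    K - t + 1 ≤ Module.finrank ℝ ↥(⨆ i : Fin (K - t), S i) := by
  classical
  haveI : Nonempty (Fin K) := ⟨⟨0, by omega⟩⟩
  have hcard : Fintype.card (Fin K) = Module.finrank ℝ (Fin K → ℝ) := by simp
  set b : Module.Basis (Fin K) ℝ (Fin K → ℝ) :=
    basisOfLinearIndependentOfCardEqFinrank hγ hcard with hb
  have hbγ : ⇑b = γ := coe_basisOfLinearIndependentOfCardEqFinrank hγ hcard
  have hW : ∀ x, x ∈ span ℝ (γ '' {j : Fin K | (j : ℕ) < t}) ↔
      ∀ k : Fin K, ¬ ((k : ℕ) < t) → b.repr x k = 0 := by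
    intro x
    rw [← hbγ, Module.Basis.mem_span_image]
    constructor
    · intro h k hk
      by_contra h0
      exact hk (h (Finsupp.mem_support_iff.2 h0))
    · intro h k hk
      by_contra h0
      exact Finsupp.mem_support_iff.1 hk (h k h0)
  have hWline : ∀ (i : Fin (K - t)) (x), x ∈ span ℝ (γ '' {j : Fin K | (j : ℕ) < t}) ⊔
      span ℝ {γ ⟨t + (i : ℕ), by have := i.isLt; omega⟩} ↔
      ∀ k : Fin K, ¬ ((k : ℕ) < t) → k ≠ ⟨t + (i : ℕ), by have := i.isLt; omega⟩ →
        b.repr x k = 0 := by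
    intro i x
    have : span ℝ (γ '' {j : Fin K | (j : ℕ) < t}) ⊔
        span ℝ {γ ⟨t + (i : ℕ), by have := i.isLt; omega⟩}
        = span ℝ (γ '' ({j : Fin K | (j : ℕ) < t} ∪ {⟨t + (i : ℕ), by have := i.isLt; omega⟩})) := by
      rw [Set.image_union, span_union, Set.image_singleton]
    rw [this, ← hbγ, Module.Basis.mem_span_image]
    constructor
    · intro h k hk hk'
      by_contra h0
      rcases h (Finsupp.mem_support_iff.2 h0) with h1 | h1
      · exact hk h1
      · exact hk' h1
    · intro h k hk
      by_contra h0
      simp only [Set.mem_union, Set.mem_setOf_eq, Set.mem_singleton_iff, not_or] at h0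
      exact Finsupp.mem_support_iff.1 hk (h k h0.1 h0.2)
  set T := ⨆ i : Fin (K - t), S i with hT
  -- choose vᵢ ∈ Sᵢ \ W
  have hv : ∀ i : Fin (K - t), ∃ v ∈ S i,
      b.repr v ⟨t + (i : ℕ), by have := i.isLt; omega⟩ ≠ 0 := by
    intro i
    obtain ⟨v, hvS, hvW⟩ := SetLike.not_le_iff_exists.1 (hnot i)
    refine ⟨v, hvS, fun h0 => hvW ?_⟩
    rw [hW]
    intro k hk
    by_cases hk' : k = ⟨t + (i : ℕ), by have := i.isLt; omega⟩
    · rw [hk']; exact h0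
    · exact (hWline i v).1 (hsub i hvS) k hk hk'
  choose v hvS hvne using hv
  -- projection onto the last K - t coordinates
  let f : (Fin K → ℝ) →ₗ[ℝ] (Fin (K - t) → ℝ) :=
    LinearMap.pi (fun i : Fin (K - t) => b.coord ⟨t + (i : ℕ), by have := i.isLt; omega⟩)
  let g : T →ₗ[ℝ] (Fin (K - t) → ℝ) := f ∘ₗ T.subtype
  -- range g = ⊤
  have hrange : LinearMap.range g = ⊤ := by
    rw [eq_top_iff, ← (Pi.basisFun ℝ (Fin (K - t))).span_eq, span_le]
    rintro _ ⟨i, rfl⟩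
    have hvT : v i ∈ T := (le_iSup S i) (hvS i)
    have key : g ⟨v i, hvT⟩ = (b.repr (v i) ⟨t + (i : ℕ), by have := i.isLt; omega⟩) •
        Pi.basisFun ℝ (Fin (K - t)) i := by
      funext j
      simp only [g, f, LinearMap.comp_apply, Submodule.subtype_apply, LinearMap.pi_apply,
        Module.Basis.coord_apply, Pi.basisFun_apply, Pi.smul_apply]
      by_cases hij : j = i
      · subst hij; simp
      · have hne : (⟨t + (j : ℕ), by have := j.isLt; omega⟩ : Fin K)
            ≠ ⟨t + (i : ℕ), by have := i.isLt; omega⟩ := by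
          simp only [ne_eq, Fin.mk.injEq]
          omega
        rw [(hWline i (v i)).1 (hsub i (hvS i)) _ (by simp) hne]
        simp [Pi.single_eq_of_ne hij]
    have : Pi.basisFun ℝ (Fin (K - t)) i
        = (b.repr (v i) ⟨t + (i : ℕ), by have := i.isLt; omega⟩)⁻¹ • g ⟨v i, hvT⟩ := by
      rw [key, smul_smul, inv_mul_cancel₀ (hvne i), one_smul]
    rw [this]
    exact Submodule.smul_mem _ _ (LinearMap.mem_range_self g _)
  -- a nonzero vector of S i₀ inside W
  set i₀ : Fin (K - t) := ⟨0, by omega⟩ with hi₀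
  set k₀ : Fin K := ⟨t + (i₀ : ℕ), by omega⟩ with hk₀
  let c : (S i₀) →ₗ[ℝ] ℝ := (b.coord k₀) ∘ₗ (S i₀).subtype
  have hkerpos : 0 < Module.finrank ℝ (LinearMap.ker c) := by
    have h1 := LinearMap.finrank_range_add_finrank_ker c
    have h2 : Module.finrank ℝ (LinearMap.range c) ≤ 1 := by
      simpa using (LinearMap.range c).finrank_le
    have := hdim i₀
    omega
  haveI : Nontrivial (LinearMap.ker c) := Module.finrank_pos_iff.1 hkerpos
  obtain ⟨x, hx0⟩ := exists_ne (0 : LinearMap.ker c)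
  -- w is the underlying vector of x
  set w : Fin K → ℝ := ((x : S i₀) : Fin K → ℝ) with hw
  have hwker : b.repr w k₀ = 0 := x.2
  have hwW : w ∈ span ℝ (γ '' {j : Fin K | (j : ℕ) < t}) := by
    rw [hW]
    intro k hk
    by_cases hk' : k = k₀
    · rw [hk']; exact hwker
    · exact (hWline i₀ w).1 (hsub i₀ (x : S i₀).2) k hk hk'
  have hwT : w ∈ T := (le_iSup S i₀) (x : S i₀).2
  have hw0 : w ≠ 0 := by
    intro h
    exact hx0 (Subtype.ext (Subtype.ext h))
  have hkergpos : 0 < Module.finrank ℝ (LinearMap.ker g) := by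
    refine (Module.finrank_pos_iff (R := ℝ) (M := LinearMap.ker g)).2 ?_
    refine ⟨⟨⟨⟨w, hwT⟩, ?_⟩, 0, ?_⟩⟩
    · rw [LinearMap.mem_ker]
      funext j
      simp only [g, f, LinearMap.comp_apply, Submodule.subtype_apply, LinearMap.pi_apply,
        Module.Basis.coord_apply, Pi.zero_apply]
      exact (hW w).1 hwW _ (by simp)
    · intro h
      exact hw0 (by simpa using congrArg (fun y : LinearMap.ker g => ((y : T) : Fin K → ℝ)) h)
  have hrn := LinearMap.finrank_range_add_finrank_ker g
  rw [hrange] at hrn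
  have htop : Module.finrank ℝ (⊤ : Submodule ℝ (Fin (K - t) → ℝ)) = K - t := by
    simp [finrank_top]
  omega
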